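/- Let Λ be a dominant weight of positive level and μ ∈ supp(Λ) a dominant weight. Then for all 1 ≤ i < j ≤ e, the statistics k⁺_{ij} and k⁻_{ij} satisfy k⁻_{ij} ≥ k⁺_{ij} ≥ k⁻_{ij} − 2. -/

import Mathlib

namespace SleHat

/-- The standard basis vector `e_k` of `ℝ^{e+2}` (realized inside `ℕ → ℝ`). -/
def eVec (k : ℕ) : ℕ → ℝ := fun m => if m = k then 1 else 0

/-- The standard dot product on `ℝ^{e+2}`, pairing weights and coweights. -/
def dot (e : ℕ) (x y : ℕ → ℝ) : ℝ := ∑ k ∈ Finset.range (e + 2), x k * y k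

/-- The simple roots of `ŝl_e`: `α_i = e_i − e_{i+1}` for `1 ≤ i ≤ e−1` and
`α_e = −e_1 + e_e − e_{e+1}`. -/
def simpleRoot (e i : ℕ) : ℕ → ℝ :=
  if i = e then -eVec 1 + eVec e - eVec (e + 1) else eVec i - eVec (i + 1)

/-- The simple coroots of `ŝl_e`: `α_i^∨ = e_i − e_{i+1}` for `1 ≤ i ≤ e−1` and
`α_e^∨ = e_0 − e_1 + e_e`. -/
def simpleCoroot (e i : ℕ) : ℕ → ℝ :=
  if i = e then eVec 0 - eVec 1 + eVec e else eVec i - eVec (i + 1)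

/-- The null root `δ = −e_{e+1}`. -/
def nullRoot (e : ℕ) : ℕ → ℝ := -eVec (e + 1)

/-- `δ^∨ = e_0`. -/
def deltaVee : ℕ → ℝ := eVec 0

/-- The real roots `α_{ij;n} = e_i − e_j + nδ`. -/
def alphaIJ (e i j : ℕ) (n : ℤ) : ℕ → ℝ := eVec i - eVec j + (n : ℝ) • nullRoot e

/-- `α_{ij;n}` is a positive real root: `i ≠ j` in `{1,…,e}`, with `n ≥ 0` if `i < j` and
`n > 0` if `i > j`. -/
def IsPosRoot (e i j : ℕ) (n : ℤ) : Prop :=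
  1 ≤ i ∧ i ≤ e ∧ 1 ≤ j ∧ j ≤ e ∧ i ≠ j ∧ (i < j → 0 ≤ n) ∧ (j < i → 0 < n)

/-- `ν` is dominant: `α_i^∨ · ν ≥ 0` for all `i ∈ {1,…,e}`. -/
def Dominant (e : ℕ) (ν : ℕ → ℝ) : Prop :=
  ∀ i, 1 ≤ i → i ≤ e → 0 ≤ dot e (simpleCoroot e i) ν

/-- `ν ≤ Λ`: the difference `Λ − ν` is a `ℤ_{≥0}`-combination of the simple roots. -/
def LeRoot (e : ℕ) (ν Λ : ℕ → ℝ) : Prop :=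
  ∃ c : ℕ → ℕ, Λ - ν = ∑ i ∈ Finset.Icc 1 e, (c i : ℝ) • simpleRoot e i

/-- The simple reflection `s_i(ν) = ν − (α_i^∨ · ν)·α_i`. -/
def sAct (e i : ℕ) (ν : ℕ → ℝ) : ℕ → ℝ :=
  ν - dot e (simpleCoroot e i) ν • simpleRoot e i

/-- `ν ∈ supp(Λ)`, i.e. `wν ≤ Λ` for every element `w` of the Weyl group `W` generated by the
simple reflections `s_1, …, s_e` (each `s_i` is an involution, so the elements of `W` are
exactly the products of the generators). -/
def InSupp (e : ℕ) (Λ ν : ℕ → ℝ) : Prop :=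
  ∀ L : List ℕ, (∀ i ∈ L, 1 ≤ i ∧ i ≤ e) →
    LeRoot e (L.foldr (fun i x => sAct e i x) ν) Λ

/-- The statistic `k⁺_{ij}` attached to a weight `μ` (for the highest weight `Λ`):
`max({−1} ∪ {n : α_{ij;n} ∈ N_μ})` if `i < j` and `max({0} ∪ {n : α_{ij;n} ∈ N_μ})` if `i > j`,
where `N_μ` is the set of positive real roots `α` with `μ + α ∈ supp(Λ)`.
The statistic `k⁻_{ij}` is `k⁺_{ji}`. -/
noncomputable def kplus (e : ℕ) (Λ μ : ℕ → ℝ) (i j : ℕ) : ℤ :=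
  if i < j then
    sSup ({-1} ∪ {n : ℤ | 0 ≤ n ∧ InSupp e Λ (μ + alphaIJ e i j n)})
  else
    sSup ({0} ∪ {n : ℤ | 0 < n ∧ InSupp e Λ (μ + alphaIJ e i j n)})

/-- The orthogonal projection of `ℝ^{e+2}` onto the subspace
`𝔥* = {h : h_1 + ⋯ + h_e = 0}`. -/
noncomputable def proj (e : ℕ) (v : ℕ → ℝ) : ℕ → ℝ :=
  fun k => if 1 ≤ k ∧ k ≤ e then v k - (∑ r ∈ Finset.Icc 1 e, v r) / e else v k

/-- The fundamental weight `Λ_i`: the orthogonal projection onto `𝔥*` of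
`e_0 + e_1 + ⋯ + e_i`. -/
noncomputable def fundWt (e i : ℕ) : ℕ → ℝ := proj e (∑ k ∈ Finset.range (i + 1), eVec k)

/-- A partition, encoded by its (weakly decreasing, eventually zero) sequence of parts
`p 0 ≥ p 1 ≥ ⋯` (0-indexed rows). -/
def IsPartition (p : ℕ → ℕ) : Prop :=
  (∀ a b, a ≤ b → p b ≤ p a) ∧ ∃ M, ∀ k, M ≤ k → p k = 0

/-- `b_i(λ)`: the number of boxes of `λ` of residue `≡ i (mod e)`.  Boxes are pairs `(r, c)`
(0-indexed) with `c < p r`; the box `(r, c)` has residue `c − r (mod e)`. -/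
noncomputable def resCount (e : ℕ) (p : ℕ → ℕ) (i : ℕ) : ℕ :=
  Set.ncard {rc : ℕ × ℕ | rc.2 < p rc.1 ∧
    ((rc.2 : ℤ) - (rc.1 : ℤ)) % (e : ℤ) = (i : ℤ) % (e : ℤ)}

/-- The weight of a partition: `Λ_e − Σ_{i=1}^e b_i(λ) α_i`. -/
noncomputable def wtPartition (e : ℕ) (p : ℕ → ℕ) : ℕ → ℝ :=
  fundWt e e - ∑ i ∈ Finset.Icc 1 e, (resCount e p i : ℝ) • simpleRoot e i

end SleHat

namespace SleHat

/-- fold of a word -/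
def foldW (e : ℕ) (L : List ℕ) (ν : ℕ → ℝ) : ℕ → ℝ := L.foldr (fun i x => sAct e i x) ν

lemma foldW_nil (e : ℕ) (ν : ℕ → ℝ) : foldW e [] ν = ν := rfl

lemma foldW_cons (e k : ℕ) (L : List ℕ) (ν : ℕ → ℝ) :
    foldW e (k :: L) ν = sAct e k (foldW e L ν) := rfl

lemma foldW_append (e : ℕ) (L M : List ℕ) (ν : ℕ → ℝ) :
    foldW e (L ++ M) ν = foldW e L (foldW e M ν) := List.foldr_append

lemma dot_add_right (e : ℕ) (w x y : ℕ → ℝ) : dot e w (x + y) = dot e w x + dot e w y := by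
  simp [dot, mul_add, Finset.sum_add_distrib]

lemma dot_sub_right (e : ℕ) (w x y : ℕ → ℝ) : dot e w (x - y) = dot e w x - dot e w y := by
  simp [dot, mul_sub, Finset.sum_sub_distrib]

lemma dot_smul_right (e : ℕ) (w : ℕ → ℝ) (c : ℝ) (x : ℕ → ℝ) :
    dot e w (c • x) = c * dot e w x := by
  simp only [dot, Finset.mul_sum, Pi.smul_apply, smul_eq_mul]
  exact Finset.sum_congr rfl (fun k _ => by ring)

lemma sAct_add (e k : ℕ) (x y : ℕ → ℝ) : sAct e k (x + y) = sAct e k x + sAct e k y := by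
  unfold sAct
  rw [dot_add_right, add_smul]
  abel

lemma sAct_smul (e k : ℕ) (c : ℝ) (x : ℕ → ℝ) : sAct e k (c • x) = c • sAct e k x := by
  unfold sAct
  rw [dot_smul_right, smul_sub, mul_smul, smul_comm]

lemma sAct_sub (e k : ℕ) (x y : ℕ → ℝ) : sAct e k (x - y) = sAct e k x - sAct e k y := by
  unfold sAct
  rw [dot_sub_right, sub_smul]
  abel

lemma foldW_add (e : ℕ) (L : List ℕ) (x y : ℕ → ℝ) :
    foldW e L (x + y) = foldW e L x + foldW e L y := by
  induction L with
  | nil => rfl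
  | cons k L ih => simp [foldW_cons, ih, sAct_add]

lemma foldW_smul (e : ℕ) (L : List ℕ) (c : ℝ) (x : ℕ → ℝ) :
    foldW e L (c • x) = c • foldW e L x := by
  induction L with
  | nil => rfl
  | cons k L ih => simp [foldW_cons, ih, sAct_smul]

lemma foldW_sub (e : ℕ) (L : List ℕ) (x y : ℕ → ℝ) :
    foldW e L (x - y) = foldW e L x - foldW e L y := by
  induction L with
  | nil => rfl
  | cons k L ih => simp [foldW_cons, ih, sAct_sub]

lemma InSupp_foldW (e : ℕ) (Λ ν : ℕ → ℝ) (h : InSupp e Λ ν) (M : List ℕ)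
    (hM : ∀ x ∈ M, 1 ≤ x ∧ x ≤ e) : InSupp e Λ (foldW e M ν) := by
  intro L hL
  have := h (L ++ M) (by
    intro x hx
    rcases List.mem_append.mp hx with h1 | h2
    · exact hL x h1
    · exact hM x h2)
  rwa [List.foldr_append] at this


lemma dot_eVec (e a : ℕ) (ν : ℕ → ℝ) (ha : a < e + 2) : dot e (eVec a) ν = ν a := by
  unfold dot eVec
  rw [Finset.sum_eq_single a]
  · simp
  · intro b _ hb; simp [hb]
  · intro h; exact absurd (Finset.mem_range.mpr ha) h

lemma dot_coroot_small (e k : ℕ) (hk1 : 1 ≤ k) (hk2 : k < e) (ν : ℕ → ℝ) :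
    dot e (simpleCoroot e k) ν = ν k - ν (k + 1) := by
  unfold simpleCoroot
  rw [if_neg (by omega)]
  have h1 : dot e (eVec k - eVec (k+1)) ν = dot e (eVec k) ν - dot e (eVec (k+1)) ν := by
    unfold dot
    rw [← Finset.sum_sub_distrib]
    exact Finset.sum_congr rfl (fun m _ => by simp [sub_mul])
  rw [h1, dot_eVec e k ν (by omega), dot_eVec e (k+1) ν (by omega)]

lemma dot_coroot_top (e : ℕ) (he : 2 ≤ e) (ν : ℕ → ℝ) :
    dot e (simpleCoroot e e) ν = ν 0 - ν 1 + ν e := by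
  unfold simpleCoroot
  rw [if_pos rfl]
  have h1 : dot e (eVec 0 - eVec 1 + eVec e) ν
      = dot e (eVec 0) ν - dot e (eVec 1) ν + dot e (eVec e) ν := by
    unfold dot
    rw [← Finset.sum_sub_distrib, ← Finset.sum_add_distrib]
    exact Finset.sum_congr rfl (fun m _ => by simp [sub_mul, add_mul])
  rw [h1, dot_eVec e 0 ν (by omega), dot_eVec e 1 ν (by omega), dot_eVec e e ν (by omega)]

lemma sAct_small (e k : ℕ) (hk1 : 1 ≤ k) (hk2 : k < e) (ν : ℕ → ℝ) :
    sAct e k ν = fun m => ν (Equiv.swap k (k+1) m) := by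
  funext m
  unfold sAct simpleRoot
  rw [if_neg (by omega)]
  simp only [Pi.sub_apply, Pi.smul_apply, smul_eq_mul]
  rw [dot_coroot_small e k hk1 hk2]
  rcases eq_or_ne m k with rfl | hmk
  · rw [Equiv.swap_apply_left]
    simp [eVec]
  · rcases eq_or_ne m (k+1) with rfl | hmk1
    · rw [Equiv.swap_apply_right]
      simp [eVec, (by omega : k + 1 ≠ k)]
    · rw [Equiv.swap_apply_of_ne_of_ne hmk hmk1]
      simp [eVec, hmk, hmk1]

lemma sAct_top (e : ℕ) (he : 2 ≤ e) (ν : ℕ → ℝ) :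
    sAct e e ν = ν - (ν 0 - ν 1 + ν e) • simpleRoot e e := by
  unfold sAct
  rw [dot_coroot_top e he]



def Tword (a b : ℕ) : List ℕ :=
  if h : a + 1 < b then a :: (Tword (a + 1) b ++ [a])
  else if a < b then [a] else []
termination_by b - a

lemma Tword_mem (a b x : ℕ) (hx : x ∈ Tword a b) : a ≤ x ∧ x < b := by
  revert hx
  induction a using Tword.induct b with
  | case1 a h ih =>
    intro hx
    rw [Tword, dif_pos h] at hx
    rcases List.mem_cons.mp hx with rfl | h2
    · omega
    · rcases List.mem_append.mp h2 with h3 | h4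
      · have := ih h3; omega
      · simp at h4; omega
  | case2 a h1 h2 =>
    intro hx
    rw [Tword, dif_neg h1, if_pos h2] at hx
    simp at hx; omega
  | case3 a h1 h2 =>
    intro hx
    rw [Tword, dif_neg h1, if_neg h2] at hx
    simp at hx



lemma swap_conj (a b m : ℕ) (h : a + 1 < b) :
    Equiv.swap a (a+1) (Equiv.swap (a+1) b (Equiv.swap a (a+1) m)) = Equiv.swap a b m := by
  rcases eq_or_ne m a with rfl | hma
  · rw [Equiv.swap_apply_left, Equiv.swap_apply_left, Equiv.swap_apply_left,
      Equiv.swap_apply_of_ne_of_ne (by omega) (by omega)]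
  rcases eq_or_ne m (a+1) with rfl | hma1
  · rw [Equiv.swap_apply_right,
      Equiv.swap_apply_of_ne_of_ne (by omega : a ≠ a + 1) (by omega : a ≠ b),
      Equiv.swap_apply_left,
      Equiv.swap_apply_of_ne_of_ne (by omega : a + 1 ≠ a) (by omega : a + 1 ≠ b)]
  rcases eq_or_ne m b with rfl | hmb
  · rw [Equiv.swap_apply_of_ne_of_ne hma hma1, Equiv.swap_apply_right,
      Equiv.swap_apply_right, Equiv.swap_apply_right]
  · rw [Equiv.swap_apply_of_ne_of_ne hma hma1,
      Equiv.swap_apply_of_ne_of_ne hma1 hmb,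
      Equiv.swap_apply_of_ne_of_ne hma hma1,
      Equiv.swap_apply_of_ne_of_ne hma hmb]


lemma Tword_fold (e : ℕ) : ∀ a b, 1 ≤ a → a ≤ b → b ≤ e → ∀ ν : ℕ → ℝ,
    foldW e (Tword a b) ν = fun m => ν (Equiv.swap a b m) := by
  intro a b
  induction a using Tword.induct b with
  | case1 a h ih =>
    intro h1 hab hbe ν
    rw [Tword, dif_pos h, foldW_cons, foldW_append]
    have hfold1 : foldW e [a] ν = fun m => ν (Equiv.swap a (a+1) m) :=
      sAct_small e a h1 (by omega) ν
    rw [hfold1, ih (by omega) (by omega) hbe, sAct_small e a h1 (by omega)]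
    funext m
    exact congrArg ν (swap_conj a b m h)
  | case2 a hn hlt =>
    intro h1 hab hbe ν
    have hb : b = a + 1 := by omega
    subst hb
    rw [Tword, dif_neg hn, if_pos hlt]
    exact sAct_small e a h1 (by omega) ν
  | case3 a hn hnlt =>
    intro h1 hab hbe ν
    have hb : b = a := by omega
    subst hb
    rw [Tword, dif_neg hn, if_neg hnlt]
    funext m
    rw [Equiv.swap_self]
    rfl

def eVecZ (k : ℕ) : ℕ → ℤ := fun m => if m = k then 1 else 0
def rootZ (e i : ℕ) : ℕ → ℤ :=
  if i = e then -eVecZ 1 + eVecZ e - eVecZ (e + 1) else eVecZ i - eVecZ (i + 1)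
def corootZ (e i : ℕ) : ℕ → ℤ :=
  if i = e then eVecZ 0 - eVecZ 1 + eVecZ e else eVecZ i - eVecZ (i + 1)

lemma rootZ_cast (e i m : ℕ) : ((rootZ e i m : ℤ) : ℝ) = simpleRoot e i m := by
  unfold rootZ simpleRoot eVec eVecZ
  split_ifs <;> simp <;> split_ifs <;> push_cast <;> ring

lemma corootZ_cast (e i m : ℕ) : ((corootZ e i m : ℤ) : ℝ) = simpleCoroot e i m := by
  unfold corootZ simpleCoroot eVec eVecZ
  split_ifs <;> simp <;> split_ifs <;> push_cast <;> ring

/-- an integer combination of the simple roots -/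
def ZComb (e : ℕ) (g : ℕ → ℤ) : ℕ → ℝ := ∑ k ∈ Finset.Icc 1 e, (g k : ℝ) • simpleRoot e k

lemma ZComb_intval (e : ℕ) (g : ℕ → ℤ) (m : ℕ) :
    ZComb e g m = ((∑ k ∈ Finset.Icc 1 e, g k * rootZ e k m : ℤ) : ℝ) := by
  unfold ZComb
  rw [Finset.sum_apply]
  push_cast
  exact Finset.sum_congr rfl (fun k _ => by rw [Pi.smul_apply, smul_eq_mul, rootZ_cast])

lemma dot_coroot_intval (e k : ℕ) (g : ℕ → ℤ) :
    ∃ z : ℤ, dot e (simpleCoroot e k) (ZComb e g) = (z : ℝ) := by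
  refine ⟨∑ m ∈ Finset.range (e + 2), corootZ e k m * (∑ k' ∈ Finset.Icc 1 e, g k' * rootZ e k' m), ?_⟩
  unfold dot
  push_cast
  refine Finset.sum_congr rfl (fun m _ => ?_)
  rw [← corootZ_cast, ZComb_intval]
  push_cast
  ring

lemma ZComb_sub_single (e k : ℕ) (hk : k ∈ Finset.Icc 1 e) (g : ℕ → ℤ) (z : ℤ) :
    ZComb e (fun k' => g k' - if k' = k then z else 0)
      = ZComb e g - (z : ℝ) • simpleRoot e k := by
  unfold ZComb
  have h2 : (z : ℝ) • simpleRoot e k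
      = ∑ k' ∈ Finset.Icc 1 e, (if k' = k then (z : ℝ) • simpleRoot e k' else 0) := by
    rw [Finset.sum_ite_eq' (Finset.Icc 1 e) k (fun k' => (z : ℝ) • simpleRoot e k'), if_pos hk]
  rw [h2, ← Finset.sum_sub_distrib]
  refine Finset.sum_congr rfl (fun k' _ => ?_)
  push_cast [apply_ite (fun t : ℤ => (t : ℝ))]
  rw [sub_smul]
  split_ifs <;> simp

lemma sAct_ZComb (e k : ℕ) (hk1 : 1 ≤ k) (hke : k ≤ e) (g : ℕ → ℤ) :
    ∃ g', sAct e k (ZComb e g) = ZComb e g' := by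
  obtain ⟨z, hz⟩ := dot_coroot_intval e k g
  refine ⟨fun k' => g k' - if k' = k then z else 0, ?_⟩
  rw [ZComb_sub_single e k (Finset.mem_Icc.mpr ⟨hk1, hke⟩) g z]
  unfold sAct
  rw [hz]

lemma foldW_ZComb (e : ℕ) (L : List ℕ) (hL : ∀ x ∈ L, 1 ≤ x ∧ x ≤ e) (g : ℕ → ℤ) :
    ∃ g', foldW e L (ZComb e g) = ZComb e g' := by
  induction L with
  | nil => exact ⟨g, rfl⟩
  | cons k L ih =>
    obtain ⟨g1, hg1⟩ := ih (fun x hx => hL x (List.mem_cons_of_mem k hx))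
    obtain ⟨g2, hg2⟩ := sAct_ZComb e k (hL k (List.mem_cons_self)).1
      (hL k (List.mem_cons_self)).2 g1
    exact ⟨g2, by rw [foldW_cons, hg1, hg2]⟩

def phi (e k : ℕ) (v : ℕ → ℝ) : ℝ := (∑ r ∈ Finset.Icc 1 k, v r) - v (e + 1)

lemma sum_eVec_Icc (a b t : ℕ) :
    ∑ r ∈ Finset.Icc a b, eVec t r = if t ∈ Finset.Icc a b then 1 else 0 := by
  unfold eVec
  exact Finset.sum_ite_eq' (Finset.Icc a b) t (fun _ => 1)

lemma phi_root (e k m : ℕ) (hk1 : 1 ≤ k) (hke : k ≤ e) (hm1 : 1 ≤ m) (hme : m ≤ e) :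
    phi e k (simpleRoot e m) = if m = k then 1 else 0 := by
  unfold phi simpleRoot
  by_cases h : m = e
  · subst h
    rw [if_pos rfl]
    have h1 : ∑ r ∈ Finset.Icc 1 k, (-eVec 1 + eVec m - eVec (m + 1)) r
        = -(∑ r ∈ Finset.Icc 1 k, eVec 1 r) + (∑ r ∈ Finset.Icc 1 k, eVec m r)
          - (∑ r ∈ Finset.Icc 1 k, eVec (m + 1) r) := by
      simp only [Pi.sub_apply, Pi.add_apply, Pi.neg_apply, Finset.sum_sub_distrib,
        Finset.sum_add_distrib, Finset.sum_neg_distrib]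
    rw [h1, sum_eVec_Icc, sum_eVec_Icc, sum_eVec_Icc]
    have hv : (-eVec 1 + eVec m - eVec (m + 1)) (m + 1) = -1 := by
      simp [eVec]
      omega
    rw [hv]
    simp only [Finset.mem_Icc]
    split_ifs <;> first | (exfalso; omega) | norm_num
  · rw [if_neg h]
    have h1 : ∑ r ∈ Finset.Icc 1 k, (eVec m - eVec (m + 1)) r
        = (∑ r ∈ Finset.Icc 1 k, eVec m r) - (∑ r ∈ Finset.Icc 1 k, eVec (m + 1) r) := by
      rw [← Finset.sum_sub_distrib]
      exact Finset.sum_congr rfl (fun r _ => by simp)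
    rw [h1, sum_eVec_Icc, sum_eVec_Icc]
    have hv : (eVec m - eVec (m + 1)) (e + 1) = 0 := by
      simp only [Pi.sub_apply, eVec]
      rw [if_neg (by omega : ¬ e + 1 = m), if_neg (by omega : ¬ e + 1 = m + 1)]
      norm_num
    rw [hv]
    simp only [Finset.mem_Icc]
    split_ifs <;> first | (exfalso; omega) | norm_num

lemma phi_sum_smul (e k : ℕ) (hk1 : 1 ≤ k) (hke : k ≤ e) (x : ℕ → ℝ) :
    phi e k (∑ m ∈ Finset.Icc 1 e, x m • simpleRoot e m) = x k := by
  have happ : ∀ r, (∑ m ∈ Finset.Icc 1 e, x m • simpleRoot e m) r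
      = ∑ m ∈ Finset.Icc 1 e, x m * simpleRoot e m r := by
    intro r
    rw [Finset.sum_apply]
    rfl
  unfold phi
  calc (∑ r ∈ Finset.Icc 1 k, (∑ m ∈ Finset.Icc 1 e, x m • simpleRoot e m) r)
        - (∑ m ∈ Finset.Icc 1 e, x m • simpleRoot e m) (e + 1)
      = ∑ m ∈ Finset.Icc 1 e, x m * phi e k (simpleRoot e m) := by
        rw [happ (e + 1)]
        simp only [happ]
        rw [Finset.sum_comm, ← Finset.sum_sub_distrib]
        refine Finset.sum_congr rfl (fun m _ => ?_)
        unfold phi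
        rw [mul_sub, Finset.mul_sum]
    _ = x k := by
        have h2 : ∀ m ∈ Finset.Icc 1 e, x m * phi e k (simpleRoot e m)
            = if m = k then x m else 0 := by
          intro m hm
          rw [Finset.mem_Icc] at hm
          rw [phi_root e k m hk1 hke hm.1 hm.2, mul_ite, mul_one, mul_zero]
        rw [Finset.sum_congr rfl h2, Finset.sum_ite_eq' (Finset.Icc 1 e) k x,
          if_pos (Finset.mem_Icc.mpr ⟨hk1, hke⟩)]
  
lemma coeff_ext (e : ℕ) (x y : ℕ → ℝ)
    (h : ∑ k ∈ Finset.Icc 1 e, x k • simpleRoot e k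
       = ∑ k ∈ Finset.Icc 1 e, y k • simpleRoot e k) :
    ∀ k, 1 ≤ k → k ≤ e → x k = y k := by
  intro k hk1 hke
  have := congrArg (phi e k) h
  rwa [phi_sum_smul e k hk1 hke, phi_sum_smul e k hk1 hke] at this

lemma keyK (e : ℕ) (Λ ξ : ℕ → ℝ) (d : ℝ) (hd : 0 ≤ d) (g : ℕ → ℤ)
    (h1 : InSupp e Λ (ξ + (2:ℝ) • ZComb e g))
    (h2 : InSupp e Λ (ξ - d • ZComb e g)) :
    InSupp e Λ ξ := by
  intro L hL
  obtain ⟨g', hg'⟩ := foldW_ZComb e L hL g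
  obtain ⟨a, ha⟩ := h1 L hL
  obtain ⟨b, hb⟩ := h2 L hL
  have ha' : Λ - (foldW e L ξ + (2:ℝ) • ZComb e g')
      = ∑ k ∈ Finset.Icc 1 e, (a k : ℝ) • simpleRoot e k := by
    rw [← hg', ← foldW_smul, ← foldW_add]
    exact ha
  have hb' : Λ - (foldW e L ξ - d • ZComb e g')
      = ∑ k ∈ Finset.Icc 1 e, (b k : ℝ) • simpleRoot e k := by
    rw [← hg', ← foldW_smul, ← foldW_sub]
    exact hb
  have hXa : Λ - foldW e L ξ
      = ∑ k ∈ Finset.Icc 1 e, ((a k : ℝ) + 2 * (g' k : ℝ)) • simpleRoot e k := by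
    have h3 : Λ - foldW e L ξ
        = (∑ k ∈ Finset.Icc 1 e, (a k : ℝ) • simpleRoot e k) + (2:ℝ) • ZComb e g' := by
      rw [← ha']
      abel
    rw [h3]
    unfold ZComb
    rw [Finset.smul_sum, ← Finset.sum_add_distrib]
    refine Finset.sum_congr rfl (fun k _ => ?_)
    rw [smul_smul, ← add_smul]
  have hXb : ∑ k ∈ Finset.Icc 1 e, (((a k : ℝ) + 2 * (g' k : ℝ)) + d * (g' k : ℝ)) • simpleRoot e k
      = ∑ k ∈ Finset.Icc 1 e, (b k : ℝ) • simpleRoot e k := by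
    rw [← hb']
    have h4 : Λ - (foldW e L ξ - d • ZComb e g') = (Λ - foldW e L ξ) + d • ZComb e g' := by
      abel
    rw [h4, hXa]
    unfold ZComb
    rw [Finset.smul_sum, ← Finset.sum_add_distrib]
    refine Finset.sum_congr rfl (fun k _ => ?_)
    rw [smul_smul, ← add_smul]
  have hcoef := coeff_ext e _ _ hXb
  refine ⟨fun k => (a k + 2 * g' k).toNat, ?_⟩
  show Λ - foldW e L ξ = ∑ k ∈ Finset.Icc 1 e, (((a k + 2 * g' k).toNat : ℕ) : ℝ) • simpleRoot e k
  rw [hXa]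
  refine Finset.sum_congr rfl (fun k hk => ?_)
  rw [Finset.mem_Icc] at hk
  congr 1
  have hnn : (0:ℤ) ≤ a k + 2 * g' k := by
    rcases le_or_gt 0 (g' k) with hg | hg
    · omega
    · have h3 := hcoef k hk.1 hk.2
      have hb0 : (0:ℝ) ≤ (b k : ℝ) := by positivity
      have hgneg : (g' k : ℝ) < 0 := by exact_mod_cast hg
      have : (0:ℝ) ≤ (a k : ℝ) + 2 * (g' k : ℝ) := by nlinarith
      exact_mod_cast this
  have hcast : (((a k + 2 * g' k).toNat : ℕ) : ℝ) = ((a k + 2 * g' k : ℤ) : ℝ) := by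
    rw [← Int.cast_natCast, Int.toNat_of_nonneg hnn]
  rw [hcast]
  push_cast
  ring

lemma telescope_eVec (i j : ℕ) (hij : i ≤ j) :
    ∑ k ∈ Finset.Ico i j, (eVec k - eVec (k + 1)) = eVec i - eVec j := by
  rw [Finset.sum_Ico_eq_sub _ hij, Finset.sum_range_sub' eVec j, Finset.sum_range_sub' eVec i]
  abel

lemma rho1_zcomb (e i j : ℕ) (hi : 1 ≤ i) (hij : i < j) (hje : j ≤ e) :
    ZComb e (fun k => if i ≤ k ∧ k < j then (1:ℤ) else 0) = eVec i - eVec j := by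
  unfold ZComb
  have h1 : ∀ k ∈ Finset.Icc 1 e,
      (((if i ≤ k ∧ k < j then (1:ℤ) else 0) : ℤ) : ℝ) • simpleRoot e k
        = if i ≤ k ∧ k < j then simpleRoot e k else 0 := by
    intro k _
    split_ifs <;> simp
  rw [Finset.sum_congr rfl h1, ← Finset.sum_filter]
  have h2 : Finset.filter (fun k => i ≤ k ∧ k < j) (Finset.Icc 1 e) = Finset.Ico i j := by
    ext k
    simp only [Finset.mem_filter, Finset.mem_Icc, Finset.mem_Ico]
    omega
  rw [h2]
  have h3 : ∀ k ∈ Finset.Ico i j, simpleRoot e k = eVec k - eVec (k + 1) := by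
    intro k hk
    rw [Finset.mem_Ico] at hk
    unfold simpleRoot
    rw [if_neg (by omega)]
  rw [Finset.sum_congr rfl h3, telescope_eVec i j (le_of_lt hij)]

lemma null_zcomb (e : ℕ) (he : 2 ≤ e) : ZComb e (fun _ => 1) = nullRoot e := by
  unfold ZComb
  simp only [Int.cast_one, one_smul]
  have h0 : Finset.Icc 1 e = Finset.Ico 1 (e + 1) := (Finset.Ico_add_one_right_eq_Icc 1 e).symm
  rw [h0, Finset.sum_Ico_succ_top (by omega)]
  have h3 : ∀ k ∈ Finset.Ico 1 e, simpleRoot e k = eVec k - eVec (k + 1) := by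
    intro k hk
    rw [Finset.mem_Ico] at hk
    unfold simpleRoot
    rw [if_neg (by omega)]
  rw [Finset.sum_congr rfl h3, telescope_eVec 1 e (by omega)]
  unfold simpleRoot nullRoot
  rw [if_pos rfl]
  abel

lemma ZComb_sub (e : ℕ) (g1 g2 : ℕ → ℤ) :
    ZComb e (fun k => g1 k - g2 k) = ZComb e g1 - ZComb e g2 := by
  unfold ZComb
  rw [← Finset.sum_sub_distrib]
  refine Finset.sum_congr rfl (fun k _ => ?_)
  push_cast
  rw [sub_smul]

lemma rho2_zcomb (e i j : ℕ) (he : 2 ≤ e) (hi : 1 ≤ i) (hij : i < j) (hje : j ≤ e) :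
    ZComb e (fun k => 1 - (if i ≤ k ∧ k < j then (1:ℤ) else 0))
      = eVec j - eVec i + nullRoot e := by
  rw [ZComb_sub, rho1_zcomb e i j hi hij hje, null_zcomb e he]
  abel

lemma mono_dom (e : ℕ) (μ : ℕ → ℝ) (hdom : Dominant e μ) :
    ∀ a b : ℕ, 1 ≤ a → a ≤ b → b ≤ e → μ b ≤ μ a := by
  intro a b ha hab
  induction b, hab using Nat.le_induction with
  | base => intro _; exact le_refl _
  | succ n hn ih =>
    intro hne
    have hc := hdom n (by omega) (by omega)
    rw [dot_coroot_small e n (by omega) (by omega)] at hc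
    have := ih (by omega)
    linarith

lemma claim1 (e : ℕ) (he : 2 ≤ e) (Λ μ : ℕ → ℝ) (hμdom : Dominant e μ)
    (i j : ℕ) (hi : 1 ≤ i) (hij : i < j) (hje : j ≤ e) (n : ℤ)
    (hA : InSupp e Λ (μ + alphaIJ e i j n)) :
    InSupp e Λ (μ + alphaIJ e j i n) := by
  have hd : 0 ≤ μ i - μ j := by
    have := mono_dom e μ hμdom i j hi (le_of_lt hij) hje
    linarith
  apply keyK e Λ (μ + alphaIJ e j i n) (μ i - μ j) hd
      (fun k => if i ≤ k ∧ k < j then (1:ℤ) else 0)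
  · rw [rho1_zcomb e i j hi hij hje]
    have heq : μ + alphaIJ e j i n + (2:ℝ) • (eVec i - eVec j) = μ + alphaIJ e i j n := by
      funext m
      simp only [Pi.add_apply, Pi.smul_apply, Pi.sub_apply, smul_eq_mul, alphaIJ,
        nullRoot, Pi.neg_apply, eVec]
      split_ifs <;> first | (exfalso; omega) | ring
    rw [heq]
    exact hA
  · rw [rho1_zcomb e i j hi hij hje]
    have hw := InSupp_foldW e Λ _ hA (Tword i j)
      (fun x hx => by have := Tword_mem i j x hx; omega)
    rw [Tword_fold e i j hi (le_of_lt hij) hje] at hw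
    have heq : (fun m => (μ + alphaIJ e i j n) (Equiv.swap i j m))
        = μ + alphaIJ e j i n - (μ i - μ j) • (eVec i - eVec j) := by
      funext m
      rcases eq_or_ne m i with rfl | hmi
      · rw [Equiv.swap_apply_left]
        simp only [Pi.add_apply, Pi.sub_apply, Pi.smul_apply, smul_eq_mul, alphaIJ,
          nullRoot, Pi.neg_apply, eVec]
        split_ifs <;> first | (exfalso; omega) | ring
      rcases eq_or_ne m j with rfl | hmj
      · rw [Equiv.swap_apply_right]
        simp only [Pi.add_apply, Pi.sub_apply, Pi.smul_apply, smul_eq_mul, alphaIJ,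
          nullRoot, Pi.neg_apply, eVec]
        split_ifs <;> first | (exfalso; omega) | ring
      · rw [Equiv.swap_apply_of_ne_of_ne hmi hmj]
        simp only [Pi.add_apply, Pi.sub_apply, Pi.smul_apply, smul_eq_mul, alphaIJ,
          nullRoot, Pi.neg_apply, eVec]
        split_ifs <;> first | (exfalso; omega) | ring
    rw [heq] at hw
    exact hw

lemma root_eval (e i j : ℕ) (he : 2 ≤ e) (hi : 1 ≤ i) (hij : i < j) (hje : j ≤ e) (m : ℕ) :
    simpleRoot e e (Equiv.swap 1 i (Equiv.swap j e m)) = (eVec j - eVec i - eVec (e + 1)) m := by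
  unfold simpleRoot
  rw [if_pos rfl]
  simp only [Pi.sub_apply, Pi.add_apply, Pi.neg_apply, eVec]
  rcases eq_or_ne m i with hc | hmi
  · have hx : Equiv.swap 1 i (Equiv.swap j e m) = 1 := by
      rw [hc, Equiv.swap_apply_of_ne_of_ne (by omega : i ≠ j) (by omega : i ≠ e),
        Equiv.swap_apply_right]
    rw [hx]
    split_ifs <;> first | (exfalso; omega) | norm_num
  rcases eq_or_ne m j with hc | hmj
  · have hx : Equiv.swap 1 i (Equiv.swap j e m) = e := by
      rw [hc, Equiv.swap_apply_left,
        Equiv.swap_apply_of_ne_of_ne (by omega : e ≠ 1) (by omega : e ≠ i)]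
    rw [hx]
    split_ifs <;> first | (exfalso; omega) | norm_num
  rcases eq_or_ne m (e + 1) with hc | hm1
  · have hx : Equiv.swap 1 i (Equiv.swap j e m) = e + 1 := by
      rw [hc, Equiv.swap_apply_of_ne_of_ne (by omega : e + 1 ≠ j) (by omega : e + 1 ≠ e),
        Equiv.swap_apply_of_ne_of_ne (by omega : e + 1 ≠ 1) (by omega : e + 1 ≠ i)]
    rw [hx]
    split_ifs <;> first | (exfalso; omega) | norm_num
  rcases eq_or_ne m e with hc | hme
  · have hx : Equiv.swap 1 i (Equiv.swap j e m) = j := by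
      rw [hc, Equiv.swap_apply_right,
        Equiv.swap_apply_of_ne_of_ne (by omega : j ≠ 1) (by omega : j ≠ i)]
    rw [hx]
    split_ifs <;> first | (exfalso; omega) | norm_num
  · have hx : Equiv.swap 1 i (Equiv.swap j e m) = Equiv.swap 1 i m := by
      rw [Equiv.swap_apply_of_ne_of_ne (by omega : m ≠ j) (by omega : m ≠ e)]
    rcases eq_or_ne m 1 with hc | hm1'
    · have hx2 : Equiv.swap 1 i m = i := by rw [hc, Equiv.swap_apply_left]
      rw [hx, hx2]
      split_ifs <;> first | (exfalso; omega) | norm_num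
    · have hx2 : Equiv.swap 1 i m = m := by
        rw [Equiv.swap_apply_of_ne_of_ne (by omega : m ≠ 1) (by omega : m ≠ i)]
      rw [hx, hx2]
      split_ifs <;> first | (exfalso; omega) | norm_num

lemma M2_fold (e i j : ℕ) (he : 2 ≤ e) (hi : 1 ≤ i) (hij : i < j) (hje : j ≤ e) (ν : ℕ → ℝ) :
    foldW e (Tword j e ++ Tword 1 i ++ [e] ++ (Tword 1 i ++ Tword j e)) ν
      = ν - (ν 0 - ν i + ν j) • (eVec j - eVec i - eVec (e + 1)) := by
  have hfold1i : ∀ w : ℕ → ℝ, foldW e (Tword 1 i) w = fun m => w (Equiv.swap 1 i m) :=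
    Tword_fold e 1 i (le_refl 1) hi (by omega)
  have hfoldje : ∀ w : ℕ → ℝ, foldW e (Tword j e) w = fun m => w (Equiv.swap j e m) :=
    Tword_fold e j e (by omega) hje (le_refl e)
  have hx2 : foldW e (Tword 1 i) (foldW e (Tword j e) ν)
      = fun m => ν (Equiv.swap j e (Equiv.swap 1 i m)) := by
    rw [hfoldje ν, hfold1i]
  have h0 : Equiv.swap j e (Equiv.swap 1 i 0) = 0 := by
    rw [Equiv.swap_apply_of_ne_of_ne (by omega : (0:ℕ) ≠ 1) (by omega : (0:ℕ) ≠ i),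
      Equiv.swap_apply_of_ne_of_ne (by omega : (0:ℕ) ≠ j) (by omega : (0:ℕ) ≠ e)]
  have h1 : Equiv.swap j e (Equiv.swap 1 i 1) = i := by
    rw [Equiv.swap_apply_left,
      Equiv.swap_apply_of_ne_of_ne (by omega : i ≠ j) (by omega : i ≠ e)]
  have h2 : Equiv.swap j e (Equiv.swap 1 i e) = j := by
    rw [Equiv.swap_apply_of_ne_of_ne (by omega : e ≠ 1) (by omega : e ≠ i),
      Equiv.swap_apply_right]
  have hx3 : foldW e [e] (foldW e (Tword 1 i ++ Tword j e) ν)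
      = (fun m => ν (Equiv.swap j e (Equiv.swap 1 i m)))
        - (ν 0 - ν i + ν j) • simpleRoot e e := by
    have hstep : foldW e [e] (foldW e (Tword 1 i ++ Tword j e) ν)
        = sAct e e (foldW e (Tword 1 i ++ Tword j e) ν) := rfl
    rw [hstep, foldW_append, hx2, sAct_top e he]
    simp only [h0, h1, h2]
  rw [foldW_append, foldW_append, hx3, foldW_append]
  rw [foldW_sub, foldW_sub, foldW_smul, foldW_smul]
  have hx4 : foldW e (Tword j e) (foldW e (Tword 1 i)
      (fun m => ν (Equiv.swap j e (Equiv.swap 1 i m)))) = ν := by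
    rw [hfold1i, hfoldje]
    funext m
    simp only [Equiv.swap_apply_self]
  have hx5 : foldW e (Tword j e) (foldW e (Tword 1 i) (simpleRoot e e))
      = eVec j - eVec i - eVec (e + 1) := by
    rw [hfold1i, hfoldje]
    funext m
    exact root_eval e i j he hi hij hje m
  rw [hx4, hx5]

lemma claim2 (e : ℕ) (he : 2 ≤ e) (Λ μ : ℕ → ℝ) (hμdom : Dominant e μ)
    (i j : ℕ) (hi : 1 ≤ i) (hij : i < j) (hje : j ≤ e) (n : ℤ)
    (hB : InSupp e Λ (μ + alphaIJ e j i n)) :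
    InSupp e Λ (μ + alphaIJ e i j (n - 2)) := by
  have hd : 0 ≤ μ 0 - μ i + μ j := by
    have h1 := hμdom e (by omega) (le_refl e)
    rw [dot_coroot_top e he] at h1
    have h2 : μ i ≤ μ 1 := mono_dom e μ hμdom 1 i (le_refl 1) hi (by omega)
    have h3 : μ e ≤ μ j := mono_dom e μ hμdom j e (by omega) hje (le_refl e)
    linarith
  apply keyK e Λ (μ + alphaIJ e i j (n - 2)) (μ 0 - μ i + μ j) hd
      (fun k => 1 - (if i ≤ k ∧ k < j then (1:ℤ) else 0))
  · rw [rho2_zcomb e i j he hi hij hje]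
    have heq : μ + alphaIJ e i j (n - 2) + (2:ℝ) • (eVec j - eVec i + nullRoot e)
        = μ + alphaIJ e j i n := by
      funext m
      simp only [Pi.add_apply, Pi.sub_apply, Pi.smul_apply, smul_eq_mul, alphaIJ,
        nullRoot, Pi.neg_apply, eVec]
      push_cast
      split_ifs <;> first | (exfalso; omega) | ring
    rw [heq]
    exact hB
  · rw [rho2_zcomb e i j he hi hij hje]
    have hw := InSupp_foldW e Λ _ hB
      (Tword j e ++ Tword 1 i ++ [e] ++ (Tword 1 i ++ Tword j e)) (by
        intro x hx
        simp only [List.mem_append, List.mem_singleton] at hx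
        rcases hx with ((h1 | h2) | h3) | (h4 | h5)
        · have := Tword_mem j e x h1; omega
        · have := Tword_mem 1 i x h2; omega
        · omega
        · have := Tword_mem 1 i x h4; omega
        · have := Tword_mem j e x h5; omega)
    rw [M2_fold e i j he hi hij hje] at hw
    have hz0 : (μ + alphaIJ e j i n) 0 = μ 0 := by
      simp only [Pi.add_apply, alphaIJ, Pi.sub_apply, Pi.smul_apply, smul_eq_mul,
        nullRoot, Pi.neg_apply, eVec]
      rw [if_neg (by omega : ¬ (0:ℕ) = j), if_neg (by omega : ¬ (0:ℕ) = i),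
        if_neg (by omega : ¬ (0:ℕ) = e + 1)]
      ring
    have hzi : (μ + alphaIJ e j i n) i = μ i - 1 := by
      simp only [Pi.add_apply, alphaIJ, Pi.sub_apply, Pi.smul_apply, smul_eq_mul,
        nullRoot, Pi.neg_apply, eVec]
      rw [if_neg (by omega : ¬ i = j), if_pos trivial, if_neg (by omega : ¬ i = e + 1)]
      ring
    have hzj : (μ + alphaIJ e j i n) j = μ j + 1 := by
      simp only [Pi.add_apply, alphaIJ, Pi.sub_apply, Pi.smul_apply, smul_eq_mul,
        nullRoot, Pi.neg_apply, eVec]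
      rw [if_pos trivial, if_neg (by omega : ¬ j = i), if_neg (by omega : ¬ j = e + 1)]
      ring
    rw [hz0, hzi, hzj] at hw
    have heq : μ + alphaIJ e j i n - (μ 0 - (μ i - 1) + (μ j + 1)) • (eVec j - eVec i - eVec (e + 1))
        = μ + alphaIJ e i j (n - 2) - (μ 0 - μ i + μ j) • (eVec j - eVec i + nullRoot e) := by
      funext m
      simp only [Pi.add_apply, Pi.sub_apply, Pi.smul_apply, smul_eq_mul, alphaIJ,
        nullRoot, Pi.neg_apply, eVec]
      push_cast
      split_ifs <;> first | (exfalso; omega) | ring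
    rw [heq] at hw
    exact hw

lemma hbound_lemma (e : ℕ) (he : 2 ≤ e) (Λ μ : ℕ → ℝ) :
    ∀ a b : ℕ, 1 ≤ a → a ≤ e → 1 ≤ b → b ≤ e → ∀ n : ℤ,
      InSupp e Λ (μ + alphaIJ e a b n) → (n : ℝ) ≤ μ (e+1) - Λ (e+1) := by
  intro a b ha1 hae hb1 hbe n h
  obtain ⟨c, hc⟩ := h [] (fun x hx => absurd hx (List.not_mem_nil))
  have hc1 := congrFun hc (e+1)
  have hsum : (∑ k ∈ Finset.Icc 1 e, ((c k : ℕ) : ℝ) • simpleRoot e k) (e+1)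
      = -((c e : ℕ) : ℝ) := by
    rw [Finset.sum_apply]
    have hterm : ∀ k ∈ Finset.Icc 1 e, (((c k : ℕ) : ℝ) • simpleRoot e k) (e+1)
        = if k = e then -((c k : ℕ) : ℝ) else 0 := by
      intro k hk
      rw [Finset.mem_Icc] at hk
      rcases eq_or_ne k e with hke | hke
      · rw [if_pos hke, hke]
        unfold simpleRoot
        rw [if_pos rfl]
        simp only [Pi.smul_apply, Pi.sub_apply, Pi.add_apply, Pi.neg_apply, eVec, smul_eq_mul]
        rw [if_neg (by omega : ¬ e + 1 = 1), if_neg (by omega : ¬ e + 1 = e), if_pos trivial]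
        ring
      · rw [if_neg hke]
        unfold simpleRoot
        rw [if_neg hke]
        simp only [Pi.smul_apply, Pi.sub_apply, eVec, smul_eq_mul]
        rw [if_neg (by omega : ¬ e + 1 = k), if_neg (by omega : ¬ e + 1 = k + 1)]
        ring
    rw [Finset.sum_congr rfl hterm, Finset.sum_ite_eq' (Finset.Icc 1 e) e _,
      if_pos (Finset.mem_Icc.mpr ⟨by omega, le_refl e⟩)]
  have hα : alphaIJ e a b n (e+1) = -(n:ℝ) := by
    simp only [alphaIJ, Pi.add_apply, Pi.sub_apply, Pi.smul_apply, smul_eq_mul,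
      nullRoot, Pi.neg_apply, eVec]
    rw [if_neg (by omega : ¬ e + 1 = a), if_neg (by omega : ¬ e + 1 = b), if_pos trivial]
    ring
  have hred : List.foldr (fun i x => sAct e i x) (μ + alphaIJ e a b n) []
      = μ + alphaIJ e a b n := rfl
  rw [hred] at hc1
  simp only [Pi.sub_apply, Pi.add_apply] at hc1
  rw [hα, hsum] at hc1
  have hcc : (0:ℝ) ≤ ((c e : ℕ) : ℝ) := Nat.cast_nonneg _
  linarith


/-- For `Λ` dominant of positive level and `μ ∈ supp(Λ)` dominant, the
statistics satisfy `k⁻_{ij} ≥ k⁺_{ij} ≥ k⁻_{ij} − 2` for all `1 ≤ i < j ≤ e`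
(recall `k⁻_{ij} = k⁺_{ji}`). -/
theorem kplus_kminus_bounds (e : ℕ) (he : 2 ≤ e)
    (Λ : ℕ → ℝ) (hΛmem : ∑ r ∈ Finset.Icc 1 e, Λ r = 0)
    (hΛdom : Dominant e Λ) (hΛlev : 0 < dot e deltaVee Λ)
    (μ : ℕ → ℝ) (hμ : InSupp e Λ μ) (hμdom : Dominant e μ) :
    ∀ i j : ℕ, 1 ≤ i → i < j → j ≤ e →
      kplus e Λ μ i j ≤ kplus e Λ μ j i ∧
      kplus e Λ μ j i - 2 ≤ kplus e Λ μ i j := by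
  intro i j hi hij hje
  rw [kplus, if_pos hij, kplus, if_neg (by omega : ¬ j < i)]
  have hm1A : (-1 : ℤ) ∈ ({-1} ∪ {n : ℤ | 0 ≤ n ∧ InSupp e Λ (μ + alphaIJ e i j n)} : Set ℤ) :=
    Set.mem_union_left _ rfl
  have h0B : (0 : ℤ) ∈ ({0} ∪ {n : ℤ | 0 < n ∧ InSupp e Λ (μ + alphaIJ e j i n)} : Set ℤ) :=
    Set.mem_union_left _ rfl
  have hbddA : BddAbove ({-1} ∪ {n : ℤ | 0 ≤ n ∧ InSupp e Λ (μ + alphaIJ e i j n)} : Set ℤ) := by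
    refine ⟨max (-1) ⌊μ (e+1) - Λ (e+1)⌋, ?_⟩
    intro x hx
    simp only [Set.mem_union, Set.mem_singleton_iff, Set.mem_setOf_eq] at hx
    rcases hx with hx | ⟨hx0, hxin⟩
    · subst hx
      exact le_max_left _ _
    · have hb := hbound_lemma e he Λ μ i j hi (by omega) (by omega) hje x hxin
      exact le_trans (Int.le_floor.mpr hb) (le_max_right _ _)
  have hbddB : BddAbove ({0} ∪ {n : ℤ | 0 < n ∧ InSupp e Λ (μ + alphaIJ e j i n)} : Set ℤ) := by
    refine ⟨max 0 ⌊μ (e+1) - Λ (e+1)⌋, ?_⟩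
    intro x hx
    simp only [Set.mem_union, Set.mem_singleton_iff, Set.mem_setOf_eq] at hx
    rcases hx with hx | ⟨hx0, hxin⟩
    · subst hx
      exact le_max_left _ _
    · have hb := hbound_lemma e he Λ μ j i (by omega) hje hi (by omega) x hxin
      exact le_trans (Int.le_floor.mpr hb) (le_max_right _ _)
  constructor
  · apply csSup_le ⟨-1, hm1A⟩
    intro x hx
    simp only [Set.mem_union, Set.mem_singleton_iff, Set.mem_setOf_eq] at hx
    have h0 : (0:ℤ) ≤ sSup ({0} ∪ {n : ℤ | 0 < n ∧ InSupp e Λ (μ + alphaIJ e j i n)} : Set ℤ) :=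
      le_csSup hbddB h0B
    rcases hx with hx | ⟨hx0, hxin⟩
    · subst hx
      linarith
    · rcases eq_or_lt_of_le hx0 with h0x | h1x
      · rw [← h0x]
        exact h0
      · have hxB : x ∈ ({0} ∪ {n : ℤ | 0 < n ∧ InSupp e Λ (μ + alphaIJ e j i n)} : Set ℤ) :=
          Set.mem_union_right _ ⟨h1x, claim1 e he Λ μ hμdom i j hi hij hje x hxin⟩
        exact le_csSup hbddB hxB
  · have hm1 : (-1:ℤ) ≤ sSup ({-1} ∪ {n : ℤ | 0 ≤ n ∧ InSupp e Λ (μ + alphaIJ e i j n)} : Set ℤ) :=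
      le_csSup hbddA hm1A
    have h2 : sSup ({0} ∪ {n : ℤ | 0 < n ∧ InSupp e Λ (μ + alphaIJ e j i n)} : Set ℤ)
        ≤ sSup ({-1} ∪ {n : ℤ | 0 ≤ n ∧ InSupp e Λ (μ + alphaIJ e i j n)} : Set ℤ) + 2 := by
      apply csSup_le ⟨0, h0B⟩
      intro x hx
      simp only [Set.mem_union, Set.mem_singleton_iff, Set.mem_setOf_eq] at hx
      rcases hx with hx | ⟨hx0, hxin⟩
      · subst hx
        linarith
      · rcases le_or_gt x 1 with hx1 | hx2
        · linarith
        · have hxA : x - 2 ∈ ({-1} ∪ {n : ℤ | 0 ≤ n ∧ InSupp e Λ (μ + alphaIJ e i j n)} : Set ℤ) :=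
            Set.mem_union_right _ ⟨by omega, claim2 e he Λ μ hμdom i j hi hij hje x hxin⟩
          have := le_csSup hbddA hxA
          linarith
    linarith


end SleHat
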